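/- Let c ≥ 1 and let A be a finite-dimensional commutative unital ℝ-algebra with a ℤ/cℤ-grading A = ⊕_{k ∈ ℤ/cℤ} A_k (so A_k·A_l ⊆ A_{k+l} and 1 ∈ A_0). Suppose there is an ℝ-linear form φ_0 : A_0 → ℝ with φ_0(1) = 1 such that the bilinear form Q_0(a,b) = φ_0(ab) on A_0 is positive definite. If there exists a ∈ A_1 such that A_0 = (A_0 ∩ Ker E_a) ⊕ (A_0 ∩ Im E_a), then: the Jacobson radical R(A) is contained in Ker E_a; A = Im E_a ⊕ Ker E_a as ℝ-vector spaces; and the ℝ-subalgebra of A generated by a is semisimple (equivalently, contains no nonzero nilpotent element). -/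

import Mathlib

set_option maxHeartbeats 1000000
set_option synthInstance.maxHeartbeats 1000000

open DirectSum TensorProduct

set_option synthInstance.maxHeartbeats 1000000 in
set_option maxHeartbeats 1000000 in
lemma component_isNilpotent
    {c : ℕ} (hc : 1 ≤ c)
    {A : Type*} [CommRing A] [Algebra ℝ A]
    (Agr : ZMod c → Submodule ℝ A)
    [GradedRing Agr]
    (x : A) (hx : IsNilpotent x) (m : ZMod c) :
    IsNilpotent (DirectSum.decompose Agr x m : A) := by
  classical
  haveI : NeZero c := ⟨by omega⟩
  set ω : ℂ := Complex.exp (2 * Real.pi * Complex.I / c) with hω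
  have hprim : IsPrimitiveRoot ω c := Complex.isPrimitiveRoot_exp c (by omega)
  have hωc : ω ^ c = 1 := hprim.pow_eq_one
  have key : ∀ s : ℕ, ω ^ s = ω ^ (s % c) := by
    intro s
    conv_lhs => rw [← Nat.mod_add_div s c]
    rw [pow_add, pow_mul, hωc, one_pow, mul_one]
  have hcongr : ∀ s t : ℕ, s ≡ t [MOD c] → ω ^ s = ω ^ t := by
    intro s t h
    rw [key s, key t, h]
  -- twisted ring homomorphisms into the complexification
  have hτ : ∀ j : ℕ, ∃ g : A →+* (TensorProduct ℝ ℂ A), ∀ y : A,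
      g y = ∑ k : ZMod c, (ω ^ (j * k.val)) ⊗ₜ[ℝ] (DirectSum.decompose Agr y k : A) := by
    intro j
    obtain ⟨F, hF⟩ : ∃ F : (⨁ i, Agr i) →+* (TensorProduct ℝ ℂ A),
        ∀ (i : ZMod c) (v : Agr i), F (DirectSum.of (fun i => Agr i) i v)
          = (ω ^ (j * i.val)) ⊗ₜ[ℝ] (v : A) := by
      refine ⟨DirectSum.toSemiring
        (fun i : ZMod c => ({
          toFun := fun v => (ω ^ (j * i.val)) ⊗ₜ[ℝ] (v : A)
          map_zero' := by simp
          map_add' := fun v w => by simp [TensorProduct.tmul_add] }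
            : Agr i →+ (TensorProduct ℝ ℂ A))) ?_ ?_, ?_⟩
      · simp only [AddMonoidHom.coe_mk, ZeroHom.coe_mk]
        rw [SetLike.coe_gOne, ZMod.val_zero, Nat.mul_zero, pow_zero,
          Algebra.TensorProduct.one_def]
      · intro i i' ai ai'
        simp only [AddMonoidHom.coe_mk, ZeroHom.coe_mk]
        rw [SetLike.coe_gMul, Algebra.TensorProduct.tmul_mul_tmul, ← pow_add]
        congr 1
        apply hcongr
        calc j * (i + i').val = j * ((i.val + i'.val) % c) := by rw [ZMod.val_add]
          _ ≡ j * (i.val + i'.val) [MOD c] :=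
            Nat.ModEq.mul_left j (Nat.mod_modEq _ c)
          _ = j * i.val + j * i'.val := by ring
      · intro i v
        apply DirectSum.toSemiring_of
    refine ⟨{
      toFun := fun y => F (DirectSum.decompose Agr y)
      map_one' := by
        show F (DirectSum.decompose Agr (1 : A)) = 1
        rw [DirectSum.decompose_one, map_one]
      map_mul' := fun y z => by
        show F (DirectSum.decompose Agr (y * z))
          = F (DirectSum.decompose Agr y) * F (DirectSum.decompose Agr z)
        rw [DirectSum.decompose_mul, map_mul]
      map_zero' := by
        show F (DirectSum.decompose Agr (0 : A)) = 0
        rw [DirectSum.decompose_zero, map_zero]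
      map_add' := fun y z => by
        show F (DirectSum.decompose Agr (y + z))
          = F (DirectSum.decompose Agr y) + F (DirectSum.decompose Agr z)
        rw [DirectSum.decompose_add, map_add] }, ?_⟩
    intro y
    simp only [RingHom.coe_mk, MonoidHom.coe_mk, OneHom.coe_mk]
    conv_lhs => rw [← DirectSum.sum_support_of (DirectSum.decompose Agr y)]
    rw [map_sum]
    rw [Finset.sum_congr rfl (fun k _ => hF k _)]
    refine Finset.sum_subset (Finset.subset_univ _) ?_
    intro k _ hk
    have : DirectSum.decompose Agr y k = 0 := DFinsupp.notMem_support_iff.mp hk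
    simp [this]
  choose τ hτapp using hτ
  -- averaging: isolate the m-th component
  have hnil : IsNilpotent (((c : ℂ)) ⊗ₜ[ℝ] (DirectSum.decompose Agr x m : A)
      : TensorProduct ℝ ℂ A) := by
    have hsum : (((c : ℂ)) ⊗ₜ[ℝ] (DirectSum.decompose Agr x m : A) : TensorProduct ℝ ℂ A)
        = ∑ j ∈ Finset.range c,
            ((ω ^ ((c - m.val) * j)) ⊗ₜ[ℝ] (1 : A)) * τ j x := by
      have hstep : ∀ j ∈ Finset.range c,
          ((ω ^ ((c - m.val) * j)) ⊗ₜ[ℝ] (1 : A)) * τ j x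
          = ∑ k : ZMod c, ((ω ^ (c - m.val + k.val)) ^ j) ⊗ₜ[ℝ]
              (DirectSum.decompose Agr x k : A) := by
        intro j _
        rw [hτapp j x, Finset.mul_sum]
        refine Finset.sum_congr rfl (fun k _ => ?_)
        rw [Algebra.TensorProduct.tmul_mul_tmul, one_mul, ← pow_add, ← pow_mul]
        congr 2
        ring
      rw [Finset.sum_congr rfl hstep, Finset.sum_comm]
      rw [Finset.sum_congr rfl
        (fun k _ => (TensorProduct.sum_tmul _ _ _).symm)]
      rw [Finset.sum_eq_single m]
      · congr 1
        have hd : c - m.val + m.val = c := Nat.sub_add_cancel (le_of_lt (ZMod.val_lt m))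
        rw [hd]
        rw [Finset.sum_congr rfl (fun j _ => by rw [hωc, one_pow])]
        simp
      · intro k _ hkm
        have hζc : (ω ^ (c - m.val + k.val)) ^ c = 1 := by
          rw [← pow_mul, mul_comm, pow_mul, hωc, one_pow]
        have hζne : ω ^ (c - m.val + k.val) ≠ 1 := by
          intro h1
          have hdvd : c ∣ (c - m.val + k.val) := (hprim.pow_eq_one_iff_dvd _).mp h1
          have hmlt : m.val < c := ZMod.val_lt m
          have hklt : k.val < c := ZMod.val_lt k
          have heq : c - m.val + k.val = c :=
            Nat.eq_of_dvd_of_lt_two_mul (by omega) hdvd (by omega)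
          have hveq : k.val = m.val := by omega
          apply hkm
          have : ((k.val : ℕ) : ZMod c) = ((m.val : ℕ) : ZMod c) := by rw [hveq]
          rwa [ZMod.natCast_val, ZMod.cast_id, ZMod.natCast_val, ZMod.cast_id] at this
        rw [geom_sum_eq hζne, hζc, sub_self, zero_div, TensorProduct.zero_tmul]
      · intro hm
        exact absurd (Finset.mem_univ m) hm
    rw [hsum]
    refine mem_nilradical.mp (Ideal.sum_mem _ (fun j _ => mem_nilradical.mpr ?_))
    exact Commute.isNilpotent_mul_left (Commute.all _ _) (hx.map (τ j))
  obtain ⟨M, hM⟩ := hnil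
  refine ⟨M, ?_⟩
  rw [Algebra.TensorProduct.tmul_pow] at hM
  have hL := congrArg (TensorProduct.lift ((LinearMap.lsmul ℝ A).comp Complex.reLm)) hM
  rw [map_zero, TensorProduct.lift.tmul] at hL
  simp only [LinearMap.coe_comp, Function.comp_apply, Complex.reLm_coe,
    LinearMap.lsmul_apply] at hL
  have hre : ((c : ℂ) ^ M).re = (c : ℝ) ^ M := by
    rw [← Complex.ofReal_natCast, ← Complex.ofReal_pow, Complex.ofReal_re]
  rw [hre] at hL
  have hcne : ((c : ℝ) ^ M) ≠ 0 := pow_ne_zero M (by positivity)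
  have := smul_eq_zero.mp hL
  tauto


/-- Let `A` be a finite-dimensional commutative unital ℝ-algebra with a
`ℤ/cℤ`-grading (`c ≥ 1`), and suppose the bilinear form `Q₀(a,b) = φ₀(ab)` on `A₀` is
positive definite for some linear form `φ₀` with `φ₀ 1 = 1`. If there exists `a ∈ A₁`
with `A₀ = (A₀ ∩ Ker E_a) ⊕ (A₀ ∩ Im E_a)`, then the Jacobson radical of `A` is
contained in `Ker E_a`, `A = Im E_a ⊕ Ker E_a`, and the subalgebra generated by `a` is
semisimple (it contains no nonzero nilpotent element). -/
theorem radical_le_ker_of_degree_one_element_with_decomposition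
    (c : ℕ) (hc : 1 ≤ c)
    (A : Type*) [CommRing A] [Algebra ℝ A] [FiniteDimensional ℝ A]
    (Agr : ZMod c → Submodule ℝ A)
    (hinternal : DirectSum.IsInternal Agr)
    (hone : (1 : A) ∈ Agr 0)
    (hgrmul : ∀ (k l : ZMod c) (x y : A), x ∈ Agr k → y ∈ Agr l → x * y ∈ Agr (k + l))
    (φ0 : Agr 0 →ₗ[ℝ] ℝ)
    (hφ1 : φ0 ⟨1, hone⟩ = 1)
    (hpos : ∀ (x : A) (hx : x ∈ Agr 0), x ≠ 0 →
      0 < φ0 ⟨x * x, by simpa using hgrmul 0 0 x x hx hx⟩)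
    (a : A) (ha : a ∈ Agr 1)
    (hsup : Agr 0 = (Agr 0 ⊓ LinearMap.ker (LinearMap.mulLeft ℝ a)) ⊔
      (Agr 0 ⊓ LinearMap.range (LinearMap.mulLeft ℝ a)))
    (hdisj : (Agr 0 ⊓ LinearMap.ker (LinearMap.mulLeft ℝ a)) ⊓
      (Agr 0 ⊓ LinearMap.range (LinearMap.mulLeft ℝ a)) = ⊥) :
    (∀ x ∈ Ideal.jacobson (⊥ : Ideal A), a * x = 0) ∧
    (LinearMap.range (LinearMap.mulLeft ℝ a) ⊔ LinearMap.ker (LinearMap.mulLeft ℝ a) = ⊤ ∧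
      LinearMap.range (LinearMap.mulLeft ℝ a) ⊓ LinearMap.ker (LinearMap.mulLeft ℝ a) = ⊥) ∧
    (∀ x ∈ Algebra.adjoin ℝ ({a} : Set A), IsNilpotent x → x = 0) := by
  classical
  haveI : NeZero c := ⟨by omega⟩
  letI : GradedRing Agr :=
    { toDecomposition := hinternal.chooseDecomposition
      one_mem := hone
      mul_mem := fun {i j xi xj} hi hj => hgrmul i j xi xj hi hj }
  haveI : IsArtinianRing A := IsArtinianRing.of_finite ℝ A
  -- squares in A₀
  have hsq : ∀ y : A, y ∈ Agr 0 → y * y = 0 → y = 0 := by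
    intro y hy hyy
    by_contra hne
    have h1 := hpos y hy hne
    have h2 : (⟨y * y, by simpa using hgrmul 0 0 y y hy hy⟩ : Agr 0) = 0 :=
      Subtype.ext hyy
    rw [h2, map_zero] at h1
    exact lt_irrefl 0 h1
  -- A₀ is reduced
  have hred0 : ∀ (n : ℕ) (x : A), x ∈ Agr 0 → x ^ n = 0 → x = 0 := by
    intro n
    induction n using Nat.strong_induction_on with
    | _ n ih =>
      match n, ih with
      | 0, ih =>
        intro x hx hxn
        rw [pow_zero] at hxn
        calc x = x * 1 := (mul_one x).symm
          _ = x * 0 := by rw [hxn]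
          _ = 0 := mul_zero x
      | 1, ih =>
        intro x hx hxn
        rwa [pow_one] at hxn
      | (n+2), ih =>
        intro x hx hxn
        have hxpow : x ^ (n+1) ∈ Agr 0 := by
          have h := SetLike.pow_mem_graded (n+1) hx
          simpa using h
        have h0 : x ^ (n+1) * x ^ (n+1) = 0 := by
          have h1 : x ^ (n+1) * x ^ (n+1) = x ^ (n+2) * x ^ n := by ring
          rw [h1, hxn, zero_mul]
        exact ih (n+1) (by omega) x hx (hsq _ hxpow h0)
  have hred : ∀ x : A, x ∈ Agr 0 → IsNilpotent x → x = 0 := by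
    rintro x hx ⟨n, hn⟩
    exact hred0 n x hx hn
  -- b = a^c lies in A₀
  have hb : a ^ c ∈ Agr 0 := by
    have h := SetLike.pow_mem_graded c ha
    have hc0 : (c : ℕ) • (1 : ZMod c) = 0 := by
      rw [nsmul_eq_mul, mul_one, ZMod.natCast_self]
    rwa [hc0] at h
  -- find w with a^c * (a^c * w) = a^c
  have hmaps : ∀ z ∈ Agr 0, (LinearMap.mulLeft ℝ (a ^ c)) z ∈ Agr 0 := by
    intro z hz
    rw [LinearMap.mulLeft_apply]
    simpa using hgrmul 0 0 _ z hb hz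
  set T : Agr 0 →ₗ[ℝ] Agr 0 := (LinearMap.mulLeft ℝ (a ^ c)).restrict hmaps with hTdef
  have hTz : ∀ z : Agr 0, (T z : A) = a ^ c * (z : A) := fun z => rfl
  have hdisjT : ∀ z : Agr 0, T z = 0 → z ∈ LinearMap.range T → z = 0 := by
    intro z hz hzr
    obtain ⟨y, hy⟩ := hzr
    have hy' : a ^ c * (y : A) = (z : A) := by
      have := congrArg Subtype.val hy
      rwa [hTz] at this
    have hz' : a ^ c * (z : A) = 0 := by
      have := congrArg Subtype.val hz
      rwa [hTz] at this
    have h1 : (z : A) * (z : A) = 0 := by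
      calc (z : A) * (z : A) = (a ^ c * (y : A)) * (z : A) := by rw [hy']
        _ = (y : A) * (a ^ c * (z : A)) := by ring
        _ = 0 := by rw [hz', mul_zero]
    exact Subtype.ext (hsq _ z.2 h1)
  have hkk : LinearMap.ker (T ∘ₗ T) = LinearMap.ker T := by
    apply le_antisymm
    · intro z hz
      rw [LinearMap.mem_ker] at hz ⊢
      exact hdisjT (T z) hz ⟨z, rfl⟩
    · intro z hz
      rw [LinearMap.mem_ker] at hz ⊢
      rw [LinearMap.comp_apply, hz, map_zero]
  have hrr : LinearMap.range (T ∘ₗ T) = LinearMap.range T := by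
    apply Submodule.eq_of_le_of_finrank_le
    · rintro _ ⟨z, rfl⟩
      exact ⟨T z, rfl⟩
    · have h1 := LinearMap.finrank_range_add_finrank_ker (T ∘ₗ T)
      have h2 := LinearMap.finrank_range_add_finrank_ker T
      rw [hkk] at h1
      omega
  have hbrange : (⟨a ^ c, hb⟩ : Agr 0) ∈ LinearMap.range T :=
    ⟨⟨1, hone⟩, Subtype.ext (by rw [hTz]; simp)⟩
  rw [← hrr] at hbrange
  obtain ⟨u, hu⟩ := hbrange
  have hbbw : a ^ c * (a ^ c * (u : A)) = a ^ c := by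
    have h := congrArg Subtype.val hu
    rw [LinearMap.comp_apply, hTz, hTz] at h
    exact h
  set w : A := (u : A) with hwdef
  have hw : w ∈ Agr 0 := u.2
  set e : A := a ^ c * w with hedef
  have he : e ∈ Agr 0 := by simpa using hgrmul 0 0 _ w hb hw
  have hee : e * e = e := by
    calc e * e = (a ^ c * (a ^ c * w)) * w := by rw [hedef]; ring
      _ = a ^ c * w := by rw [hbbw]
  have hf : (1 : A) - e ∈ Agr 0 := Submodule.sub_mem _ hone he
  have hbf : a ^ c * (1 - e) = 0 := by
    have h1 : a ^ c * (1 - e) = a ^ c - a ^ c * (a ^ c * w) := by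
      rw [hedef]; ring
    rw [h1, hbbw, sub_self]
  -- the key fact : a * (1 - e) = 0
  have haf : a * (1 - e) = 0 := by
    have hfmem : (1 : A) - e ∈ (Agr 0 ⊓ LinearMap.ker (LinearMap.mulLeft ℝ a)) ⊔
        (Agr 0 ⊓ LinearMap.range (LinearMap.mulLeft ℝ a)) := by
      rw [← hsup]; exact hf
    obtain ⟨k, hk, mm, hmm, hkm⟩ := Submodule.mem_sup.mp hfmem
    have hk0 : k ∈ Agr 0 := hk.1
    have hak : a * k = 0 := by
      have h := (Submodule.mem_inf.mp hk).2
      rwa [LinearMap.mem_ker, LinearMap.mulLeft_apply] at h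
    have hm0 : mm ∈ Agr 0 := hmm.1
    obtain ⟨y, hy⟩ := (Submodule.mem_inf.mp hmm).2
    rw [LinearMap.mulLeft_apply] at hy
    have hfm : (1 - e) * mm = 0 := by
      apply hred _ (by simpa using hgrmul 0 0 _ _ hf hm0)
      refine ⟨c, ?_⟩
      have h1 : ((1 - e) * mm) ^ c = (1 - e) ^ (c-1) * (y ^ c * (a ^ c * (1 - e))) := by
        rw [← hy]
        calc ((1 - e) * (a * y)) ^ c = (1 - e) ^ c * (a ^ c * y ^ c) := by
              rw [mul_pow, mul_pow]
          _ = ((1 - e) ^ (c-1) * (1 - e)) * (a ^ c * y ^ c) := by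
              rw [← pow_succ, Nat.sub_add_cancel hc]
          _ = (1 - e) ^ (c-1) * (y ^ c * (a ^ c * (1 - e))) := by ring
      rw [h1, hbf, mul_zero, mul_zero]
    have hffk : (1 - e) = (1 - e) * k := by
      have hff : (1 - e) * (1 - e) = (1 - e) := by linear_combination hee
      calc (1 - e) = (1 - e) * (1 - e) := hff.symm
        _ = (1 - e) * (k + mm) := by rw [hkm]
        _ = (1 - e) * k + (1 - e) * mm := by ring
        _ = (1 - e) * k := by rw [hfm, add_zero]
    calc a * (1 - e) = a * ((1 - e) * k) := by rw [← hffk]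
      _ = (1 - e) * (a * k) := by ring
      _ = 0 := by rw [hak, mul_zero]
  have hae : a * e = a := by linear_combination -haf
  have haPe : a * (a ^ (c-1) * w) = e := by
    have h1 : a * a ^ (c-1) = a ^ c := by
      rw [← pow_succ', Nat.sub_add_cancel hc]
    rw [← mul_assoc, h1, ← hedef]
  -- graded memberships for powers of a^(c-1) * w
  have hac1 : a ^ (c-1) ∈ Agr (-1) := by
    have h := SetLike.pow_mem_graded (c-1) ha
    have h2 : ((c-1 : ℕ) • (1 : ZMod c)) = -1 := by
      rw [nsmul_eq_mul, mul_one, Nat.cast_sub hc, Nat.cast_one, ZMod.natCast_self, zero_sub]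
    rwa [h2] at h
  have hP : a ^ (c-1) * w ∈ Agr (-1) := by simpa using hgrmul (-1) 0 _ _ hac1 hw
  have hPk : ∀ k : ZMod c, (a ^ (c-1) * w) ^ (k.val) ∈ Agr (-k) := by
    intro k
    have h := SetLike.pow_mem_graded k.val hP
    have h2 : (k.val • (-1 : ZMod c)) = -k := by
      rw [nsmul_eq_mul, mul_neg_one, ZMod.natCast_val, ZMod.cast_id]
    rwa [h2] at h
  have he_pow : ∀ v : ℕ, e ^ v * e = e := by
    intro v
    induction v with
    | zero => rw [pow_zero, one_mul]
    | succ n ih => rw [pow_succ, mul_assoc, hee, ih]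
  -- the key lemma: e kills every nilpotent
  have hKL : ∀ x : A, IsNilpotent x → e * x = 0 := by
    intro x hx
    have hxsum : ∑ k : ZMod c, (DirectSum.decompose Agr x k : A) = x := by
      conv_rhs => rw [← DirectSum.sum_support_decompose Agr x]
      exact (Finset.sum_subset (Finset.subset_univ _) (fun k _ hk => by
        rw [DFinsupp.notMem_support_iff.mp hk, ZeroMemClass.coe_zero])).symm
    rw [← hxsum, Finset.mul_sum]
    refine Finset.sum_eq_zero (fun k _ => ?_)
    set n : A := (DirectSum.decompose Agr x k : A) with hndef
    have hnk : n ∈ Agr k := SetLike.coe_mem _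
    have hen : e * n ∈ Agr k := by simpa using hgrmul 0 k e n he hnk
    have hu : (a ^ (c-1) * w) ^ (k.val) * (e * n) ∈ Agr 0 := by
      have h := hgrmul (-k) k _ _ (hPk k) hen
      simpa using h
    have hunil : IsNilpotent ((a ^ (c-1) * w) ^ (k.val) * (e * n)) := by
      have h1 : IsNilpotent n := component_isNilpotent hc Agr x hx k
      have h2 : IsNilpotent (((a ^ (c-1) * w) ^ (k.val) * e) * n) :=
        Commute.isNilpotent_mul_left (Commute.all _ _) h1
      rwa [mul_assoc] at h2
    have hu0 : (a ^ (c-1) * w) ^ (k.val) * (e * n) = 0 := hred _ hu hunil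
    have hkey : e * n = a ^ (k.val) * ((a ^ (c-1) * w) ^ (k.val) * (e * n)) := by
      rw [← mul_assoc, ← mul_pow, haPe, ← mul_assoc, he_pow]
    rw [hkey, hu0, mul_zero]
  -- conclusion 1
  have hconc1 : ∀ x ∈ Ideal.jacobson (⊥ : Ideal A), a * x = 0 := by
    intro x hxJ
    have hnx : IsNilpotent x := by
      obtain ⟨M, hM⟩ := IsArtinianRing.isNilpotent_jacobson_bot (R := A)
      refine ⟨M, ?_⟩
      have h := Ideal.pow_mem_pow hxJ M
      rw [hM] at h
      exact Ideal.mem_bot.mp h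
    calc a * x = (a * e) * x := by rw [hae]
      _ = a * (e * x) := by rw [mul_assoc]
      _ = 0 := by rw [hKL x hnx, mul_zero]
  -- conclusion 2 : sup
  have hconc2a : LinearMap.range (LinearMap.mulLeft ℝ a) ⊔
      LinearMap.ker (LinearMap.mulLeft ℝ a) = ⊤ := by
    apply eq_top_iff.mpr
    rintro x -
    have h1 : e * x ∈ LinearMap.range (LinearMap.mulLeft ℝ a) :=
      ⟨(a ^ (c-1) * w) * x, by rw [LinearMap.mulLeft_apply, ← mul_assoc, haPe]⟩
    have h2 : (1 - e) * x ∈ LinearMap.ker (LinearMap.mulLeft ℝ a) := by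
      rw [LinearMap.mem_ker, LinearMap.mulLeft_apply, ← mul_assoc, haf, zero_mul]
    have hx : x = e * x + (1 - e) * x := by ring
    rw [hx]
    exact Submodule.add_mem _ (Submodule.mem_sup_left h1) (Submodule.mem_sup_right h2)
  -- conclusion 2 : inf
  have hconc2b : LinearMap.range (LinearMap.mulLeft ℝ a) ⊓
      LinearMap.ker (LinearMap.mulLeft ℝ a) = ⊥ := by
    apply eq_bot_iff.mpr
    intro x hx
    obtain ⟨hxr, hxk⟩ := Submodule.mem_inf.mp hx
    obtain ⟨y, hy⟩ := hxr
    rw [LinearMap.mulLeft_apply] at hy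
    rw [LinearMap.mem_ker, LinearMap.mulLeft_apply] at hxk
    rw [Submodule.mem_bot]
    linear_combination (-(1 - e)) * hy + y * haf + (a ^ (c-1) * w) * hxk - x * haPe
  -- conclusion 3
  have hconc3 : ∀ x ∈ Algebra.adjoin ℝ ({a} : Set A), IsNilpotent x → x = 0 := by
    intro p hp hnilp
    rw [Algebra.adjoin_singleton_eq_range_aeval] at hp
    obtain ⟨P, hPe0⟩ := hp
    have hPe : Polynomial.aeval a P = p := hPe0
    have hsplit : p = a * (Polynomial.aeval a P.divX) + algebraMap ℝ A (P.coeff 0) := by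
      conv_lhs => rw [← hPe, ← Polynomial.X_mul_divX_add P]
      rw [map_add, map_mul, Polynomial.aeval_X, Polynomial.aeval_C]
    have hep : e * p = 0 := hKL p hnilp
    have hfp : p = algebraMap ℝ A (P.coeff 0) * (1 - e) := by
      linear_combination hep + (Polynomial.aeval a P.divX) * haf + (1 - e) * hsplit
    obtain ⟨M, hM⟩ := hnilp
    rcases Nat.eq_zero_or_pos M with hM0 | hMpos
    · subst hM0
      rw [pow_zero] at hM
      calc p = p * 1 := (mul_one p).symm
        _ = p * 0 := by rw [hM]
        _ = 0 := mul_zero p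
    · have hfe : ∀ v : ℕ, ((1 : A) - e) ^ (v+1) = 1 - e := by
        intro v
        induction v with
        | zero => rw [pow_one]
        | succ n ih =>
          rw [pow_succ, ih]
          linear_combination hee
      have hpow : p ^ M = (algebraMap ℝ A (P.coeff 0)) ^ M * (1 - e) := by
        rw [hfp, mul_pow]
        congr 1
        obtain ⟨v, rfl⟩ : ∃ v, M = v + 1 := ⟨M - 1, by omega⟩
        exact hfe v
      have h0 : (algebraMap ℝ A (P.coeff 0)) ^ M * (1 - e) = 0 := by
        rw [← hpow, hM]
      by_cases hr : P.coeff 0 = 0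
      · rw [hfp, hr, map_zero, zero_mul]
      · have h1 : (1 : A) - e = 0 := by
          have h2 := congrArg (fun z => algebraMap ℝ A (((P.coeff 0) ^ M)⁻¹) * z) h0
          rw [← mul_assoc, ← map_pow, ← map_mul,
            inv_mul_cancel₀ (pow_ne_zero M hr), map_one, one_mul, mul_zero] at h2
          exact h2
        rw [hfp, h1, mul_zero]
  exact ⟨hconc1, ⟨hconc2a, hconc2b⟩, hconc3⟩
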